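/- Let d ≥ k > 0 be integers, K a finite set with |K| = k, μ : K → ℕ, and μ₀ = ∑_{j∈K} μ_j + d - 1. Define rational numbers e_I for subsets I ⊆ K by: e_I = 0 if |I| < k - 1, e_I = 1 if |I| = k - 1, and e_K = d - k. Then ∑_{I ⊆ K} e_I / ((μ₀ + 1) · ∏_{i ∈ I} (μ_i + 1)) = 1 / ∏_{j ∈ K} (μ_j + 1), as an identity of rational numbers. -/

import Mathlib

theorem euler_char_simplex_identity {α : Type*} [DecidableEq α]
    (K : Finset α) (k d : ℕ) (hk : 0 < k) (hdk : k ≤ d) (hK : K.card = k)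
    (μ : α → ℕ) (μ₀ : ℕ) (hμ₀ : μ₀ = (∑ j ∈ K, μ j) + d - 1)
    (e : Finset α → ℚ)
    (he : ∀ I ∈ K.powerset,
      e I = if I.card < k - 1 then 0 else if I.card = k - 1 then 1 else (d - k : ℚ)) :
    ∑ I ∈ K.powerset, e I / ((μ₀ + 1) * ∏ i ∈ I, ((μ i : ℚ) + 1))
      = 1 / ∏ j ∈ K, ((μ j : ℚ) + 1) := by
  have hP : ∀ i ∈ K, ((μ i : ℚ) + 1) ≠ 0 := fun i _ => by positivity
  have hPne : (∏ j ∈ K, ((μ j : ℚ) + 1)) ≠ 0 := Finset.prod_ne_zero_iff.mpr hP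
  have hμ₀ne : ((μ₀ : ℚ) + 1) ≠ 0 := by positivity
  have hμ₀' : (μ₀ : ℚ) + 1 = (∑ j ∈ K, (μ j : ℚ)) + d := by
    have h1 : μ₀ + 1 = (∑ j ∈ K, μ j) + d := by omega
    have h2 := congrArg (Nat.cast : ℕ → ℚ) h1
    push_cast at h2
    linarith
  set f : Finset α → ℚ := fun I => e I / ((μ₀ + 1) * ∏ i ∈ I, ((μ i : ℚ) + 1)) with hf
  have hKmem : K ∈ K.powerset := Finset.mem_powerset_self K
  set T : Finset (Finset α) := insert K (K.image (fun j => K.erase j)) with hT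
  have hTsub : T ⊆ K.powerset := by
    intro I hI
    simp only [hT, Finset.mem_insert, Finset.mem_image] at hI
    rcases hI with rfl | ⟨j, hj, rfl⟩
    · exact hKmem
    · exact Finset.mem_powerset.mpr (Finset.erase_subset _ _)
  have hsum : ∑ I ∈ K.powerset, f I = ∑ I ∈ T, f I := by
    refine (Finset.sum_subset hTsub ?_).symm
    intro I hIpow hInT
    have hIsub : I ⊆ K := Finset.mem_powerset.mp hIpow
    have hIne : I ≠ K := by rintro rfl; exact hInT (Finset.mem_insert_self _ _)
    have hcard : I.card < k := by
      have := Finset.card_lt_card (lt_of_le_of_ne hIsub hIne)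
      omega
    have hcard2 : I.card < k - 1 := by
      by_contra h
      have hc : I.card = k - 1 := by omega
      have hdiff : (K \ I).card = 1 := by
        rw [Finset.card_sdiff_of_subset hIsub]; omega
      obtain ⟨j, hj⟩ := Finset.card_eq_one.mp hdiff
      have hjK : j ∈ K := by
        have : j ∈ K \ I := hj ▸ Finset.mem_singleton_self j
        exact (Finset.mem_sdiff.mp this).1
      have hIeq : I = K.erase j := by
        rw [Finset.erase_eq, ← hj, Finset.sdiff_sdiff_eq_self hIsub]
      apply hInT
      rw [hIeq]
      exact Finset.mem_insert_of_mem (Finset.mem_image_of_mem _ hjK)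
    simp only [hf, he I hIpow, if_pos hcard2, zero_div]
  have hKnot : K ∉ K.image (fun j => K.erase j) := by
    intro h
    obtain ⟨j, hj, hje⟩ := Finset.mem_image.mp h
    have : (K.erase j).card = k - 1 := by rw [Finset.card_erase_of_mem hj, hK]
    rw [hje] at this
    omega
  rw [hsum, hT, Finset.sum_insert hKnot]
  have hinj : ∀ j1 ∈ K, ∀ j2 ∈ K, K.erase j1 = K.erase j2 → j1 = j2 := by
    intro j1 h1 j2 h2 h
    by_contra hne
    have : j2 ∈ K.erase j1 := Finset.mem_erase.mpr ⟨fun hx => hne hx.symm, h2⟩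
    rw [h] at this
    exact (Finset.mem_erase.mp this).1 rfl
  rw [Finset.sum_image hinj]
  have hfK : f K = (d - k : ℚ) / ((μ₀ + 1) * ∏ i ∈ K, ((μ i : ℚ) + 1)) := by
    simp only [hf, he K hKmem, hK]
    rw [if_neg (by omega), if_neg (by omega)]
  have hfe : ∀ j ∈ K, f (K.erase j) =
      ((μ j : ℚ) + 1) * (1 / ((μ₀ + 1) * ∏ i ∈ K, ((μ i : ℚ) + 1))) := by
    intro j hj
    have hmem : K.erase j ∈ K.powerset :=
      Finset.mem_powerset.mpr (Finset.erase_subset _ _)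
    have hcard : (K.erase j).card = k - 1 := by rw [Finset.card_erase_of_mem hj, hK]
    have hprod : ((μ j : ℚ) + 1) * ∏ i ∈ K.erase j, ((μ i : ℚ) + 1)
        = ∏ i ∈ K, ((μ i : ℚ) + 1) := Finset.mul_prod_erase K (fun i => ((μ i : ℚ) + 1)) hj
    have hQne : (∏ i ∈ K.erase j, ((μ i : ℚ) + 1)) ≠ 0 :=
      Finset.prod_ne_zero_iff.mpr (fun i hi => hP i (Finset.mem_of_mem_erase hi))
    simp only [hf, he _ hmem, hcard, if_neg (lt_irrefl _), if_pos rfl, ↓reduceIte]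
    rw [← hprod]
    field_simp
  rw [Finset.sum_congr rfl hfe, ← Finset.sum_mul, hfK]
  have hS : ∑ j ∈ K, ((μ j : ℚ) + 1) = (∑ j ∈ K, (μ j : ℚ)) + k := by
    rw [Finset.sum_add_distrib, Finset.sum_const, hK, nsmul_eq_mul, mul_one]
  rw [hS]
  have hnum : ((d : ℚ) - k) + ((∑ j ∈ K, (μ j : ℚ)) + (k : ℚ)) = (μ₀ : ℚ) + 1 := by
    rw [hμ₀']; ring
  rw [mul_one_div, ← add_div, hnum,
    div_eq_div_iff (mul_ne_zero hμ₀ne hPne) hPne]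
  ring
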